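/- Let R be a (not necessarily commutative) ring with 1, let q be a central invertible element of R, let a be a natural number, and let x, y ∈ R with x invertible and x·y = q^{2a}·y·x. Then x^{−1} · ∏_{b=1}^{a} (1 + q^{2b−1} y) = (∏_{b=1}^{a} (1 + q^{−(2b−1)} y)) · x^{−1}. (The factors 1 + q^{±(2b−1)}y pairwise commute, so the products are unambiguous.) -/
import Mathlib

private def qfct {R : Type*} [Ring R] (q : Rˣ) (y : R) (c : ℤ) : R :=
  1 + ((q ^ c : Rˣ) : R) * y

private theorem qfct_comm {R : Type*} [Ring R] (q : Rˣ) (y : R)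
    (hq : ∀ r : R, (q : R) * r = r * (q : R)) (c d : ℤ) :
    Commute (qfct q y c) (qfct q y d) := by
  have hz : ∀ (e : ℤ) (r : R), ((q ^ e : Rˣ) : R) * r = r * ((q ^ e : Rˣ) : R) := by
    intro e r
    exact ((Commute.units_zpow_left (hq r) e))
  unfold qfct
  have key : ((q ^ c : Rˣ) : R) * y * (((q ^ d : Rˣ) : R) * y)
      = ((q ^ d : Rˣ) : R) * y * (((q ^ c : Rˣ) : R) * y) := by
    calc ((q ^ c : Rˣ) : R) * y * (((q ^ d : Rˣ) : R) * y)
        = ((q ^ c : Rˣ) : R) * (y * ((q ^ d : Rˣ) : R)) * y := by noncomm_ring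
      _ = ((q ^ c : Rˣ) : R) * (((q ^ d : Rˣ) : R) * y) * y := by rw [← hz d y]
      _ = ((q ^ d : Rˣ) : R) * ((q ^ c : Rˣ) : R) * y * y := by
          rw [← mul_assoc, hz c ((q ^ d : Rˣ) : R)]
      _ = ((q ^ d : Rˣ) : R) * (y * ((q ^ c : Rˣ) : R)) * y := by rw [← hz c y]; noncomm_ring
      _ = ((q ^ d : Rˣ) : R) * y * (((q ^ c : Rˣ) : R) * y) := by noncomm_ring
  unfold Commute SemiconjBy
  simp only [mul_add, add_mul, one_mul, mul_one]
  rw [key]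
  abel

private theorem qfct_pairwise {R : Type*} [Ring R] (q : Rˣ) (y : R)
    (hq : ∀ r : R, (q : R) * r = r * (q : R)) (l : List ℤ) :
    (l.map (qfct q y)).Pairwise Commute := by
  rw [List.pairwise_map]
  induction l with
  | nil => exact List.Pairwise.nil
  | cons c t ih => exact List.Pairwise.cons (fun d _ => qfct_comm q y hq c d) ih

theorem stmt5 {R : Type*} [Ring R] (q x : Rˣ)
    (hq : ∀ r : R, (q : R) * r = r * (q : R))
    (a : ℕ) (y : R)
    (hxy : (x : R) * y = (q : R) ^ (2 * a) * (y * (x : R))) :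
    (↑x⁻¹ : R) * ((List.range a).map (fun b => 1 + (q : R) ^ (2 * b + 1) * y)).prod
      = ((List.range a).map (fun b => 1 + (↑(q⁻¹) : R) ^ (2 * b + 1) * y)).prod * (↑x⁻¹ : R) := by
  set f := qfct q y with hf
  have hz : ∀ (e : ℤ) (r : R), ((q ^ e : Rˣ) : R) * r = r * ((q ^ e : Rˣ) : R) := by
    intro e r
    exact ((Commute.units_zpow_left (hq r) e))
  -- x⁻¹ y = q^{-2a} y x⁻¹
  have hc2 : ∀ r : R, (q : R) ^ (2 * a) * r = r * (q : R) ^ (2 * a) := by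
    intro r
    exact (Commute.pow_left (hq r) (2 * a))
  have hinv : (↑x⁻¹ : R) * y = ((q ^ (-(2 * (a : ℤ))) : Rˣ) : R) * (y * (↑x⁻¹ : R)) := by
    have h1 : y * (↑x⁻¹ : R) = ((q ^ (2 * (a : ℤ)) : Rˣ) : R) * ((↑x⁻¹ : R) * y) := by
      have h0 : y * (↑x⁻¹ : R) = (↑x⁻¹ : R) * ((x : R) * y) * (↑x⁻¹ : R) := by
        rw [← mul_assoc, Units.inv_mul, one_mul]
      rw [h0, hxy]
      have hcast : ((q ^ (2 * (a : ℤ)) : Rˣ) : R) = (q : R) ^ (2 * a) := by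
        rw [show (2 * (a : ℤ)) = ((2 * a : ℕ) : ℤ) by push_cast; ring, zpow_natCast,
          Units.val_pow_eq_pow_val]
      rw [hcast]
      calc (↑x⁻¹ : R) * ((q : R) ^ (2 * a) * (y * (x : R))) * (↑x⁻¹ : R)
          = ((↑x⁻¹ : R) * (q : R) ^ (2 * a)) * y * ((x : R) * (↑x⁻¹ : R)) := by
            noncomm_ring
        _ = ((q : R) ^ (2 * a) * (↑x⁻¹ : R)) * y * ((x : R) * (↑x⁻¹ : R)) := by rw [← hc2]
        _ = (q : R) ^ (2 * a) * ((↑x⁻¹ : R) * y) := by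
            rw [Units.mul_inv, mul_one, mul_assoc]
    calc (↑x⁻¹ : R) * y
        = ((q ^ (-(2 * (a : ℤ))) : Rˣ) : R) * (((q ^ (2 * (a : ℤ)) : Rˣ) : R) * ((↑x⁻¹ : R) * y)) := by
          rw [← mul_assoc, ← Units.val_mul, ← zpow_add q]
          simp
      _ = ((q ^ (-(2 * (a : ℤ))) : Rˣ) : R) * (y * (↑x⁻¹ : R)) := by rw [← h1]
  -- pulling x⁻¹ through one factor
  have hstep : ∀ c : ℤ, (↑x⁻¹ : R) * f c = f (c - 2 * a) * (↑x⁻¹ : R) := by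
    intro c
    simp only [hf, qfct]
    rw [mul_add, add_mul, mul_one, one_mul, ← mul_assoc, ← hz c (↑x⁻¹ : R), mul_assoc, hinv]
    congr 1
    rw [← mul_assoc, ← mul_assoc, ← Units.val_mul, ← zpow_add q]
    congr 2
  -- pulling x⁻¹ through a product
  have hlist : ∀ l : List ℤ, (↑x⁻¹ : R) * (l.map f).prod
      = (l.map (fun c => f (c - 2 * a))).prod * (↑x⁻¹ : R) := by
    intro l
    induction l with
    | nil => simp
    | cons c t ih =>
      simp only [List.map_cons, List.prod_cons, ← mul_assoc, hstep c]
      rw [mul_assoc, ih, ← mul_assoc]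
  -- the permutation
  have hperm : ∀ n : ℕ, ((List.range n).map (fun b : ℕ => f (2 * (b : ℤ) + 1 - 2 * n))).Perm
      ((List.range n).map (fun b : ℕ => f (-(2 * (b : ℤ) + 1)))) := by
    intro n
    induction n with
    | zero => simp
    | succ m ih =>
      have hL : (List.range (m + 1)).map (fun b : ℕ => f (2 * (b : ℤ) + 1 - 2 * (m + 1 : ℕ)))
          = f (-(2 * (m : ℤ) + 1)) ::
            (List.range m).map (fun b : ℕ => f (2 * (b : ℤ) + 1 - 2 * m)) := by
        rw [List.range_succ_eq_map, List.map_cons, List.map_map]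
        refine congrArg₂ List.cons ?_ ?_
        · apply congrArg
          push_cast
          ring_nf
        · apply List.map_congr_left
          intro b _
          simp only [Function.comp_apply, Nat.succ_eq_add_one]
          apply congrArg
          push_cast
          try ring
      have hR : (List.range (m + 1)).map (fun b : ℕ => f (-(2 * (b : ℤ) + 1)))
          = (List.range m).map (fun b : ℕ => f (-(2 * (b : ℤ) + 1))) ++ [f (-(2 * (m : ℤ) + 1))] := by
        rw [List.range_succ, List.map_append, List.map_singleton]
      rw [hL, hR]
      exact ((ih.cons _).trans (List.perm_append_singleton _ _).symm)
  -- rewrite goal lists as maps of f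
  have hLgoal : (List.range a).map (fun b => 1 + (q : R) ^ (2 * b + 1) * y)
      = ((List.range a).map (fun b : ℕ => (2 * (b : ℤ) + 1))).map f := by
    rw [List.map_map]
    apply List.map_congr_left
    intro b _
    have hv : ((q ^ (2 * (b : ℤ) + 1) : Rˣ) : R) = (q : R) ^ (2 * b + 1) := by
      rw [show (2 * (b : ℤ) + 1) = ((2 * b + 1 : ℕ) : ℤ) by push_cast; ring, zpow_natCast,
        Units.val_pow_eq_pow_val]
    simp only [Function.comp_apply, hf, qfct, hv]
  have hRgoal : (List.range a).map (fun b => 1 + (↑(q⁻¹) : R) ^ (2 * b + 1) * y)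
      = (List.range a).map (fun b : ℕ => f (-(2 * (b : ℤ) + 1))) := by
    apply List.map_congr_left
    intro b _
    have hv : ((q ^ (-(2 * (b : ℤ) + 1)) : Rˣ) : R) = (↑(q⁻¹) : R) ^ (2 * b + 1) := by
      rw [show (-(2 * (b : ℤ) + 1)) = -((2 * b + 1 : ℕ) : ℤ) by push_cast; ring, zpow_neg,
        zpow_natCast, ← inv_pow, Units.val_pow_eq_pow_val]
    simp only [hf, qfct, hv]
  rw [hLgoal, hRgoal, hlist, List.map_map]
  have hpw : (List.map (fun b : ℕ => f (2 * (b : ℤ) + 1 - 2 * a)) (List.range a)).Pairwise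
      Commute := by
    have h := qfct_pairwise q y hq ((List.range a).map (fun b : ℕ => (2 * (b : ℤ) + 1 - 2 * a)))
    rw [List.map_map] at h
    exact h
  have heq : List.map ((fun c => f (c - 2 * (a : ℤ))) ∘ fun b : ℕ => 2 * (b : ℤ) + 1)
      (List.range a) = List.map (fun b : ℕ => f (2 * (b : ℤ) + 1 - 2 * a)) (List.range a) := rfl
  rw [heq, (hperm a).prod_eq' hpw]
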